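/- Fix a ∈ (0,1) and let x*(θ) be the minimal solution of x = e^{θ + a(x-1)} for θ < θ_c := a - 1 - log a. Then x*(θ) → 1/a and x*'(θ) = x*(θ)/(1 - a x*(θ)) → +∞ as θ → θ_c from below (steepness of the limiting cumulant generating function). -/

import Mathlib

open Real Set Filter

lemma steep_gmono (a : ℝ) (ha0 : 0 < a) :
    StrictMonoOn (fun x => Real.log x - a * (x - 1)) (Set.Ioc 0 (1/a)) := by
  apply strictMonoOn_of_deriv_pos (convex_Ioc 0 (1/a))
  · apply ContinuousOn.sub
    · exact Real.continuousOn_log.mono (fun x hx => by simp; exact ne_of_gt hx.1)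
    · fun_prop
  · intro x hx
    rw [interior_Ioc] at hx
    have hx0 : 0 < x := hx.1
    have hd : HasDerivAt (fun x => Real.log x - a * (x - 1)) (x⁻¹ - a * 1) x :=
      (Real.hasDerivAt_log hx0.ne').sub (((hasDerivAt_id x).sub_const 1).const_mul a)
    rw [hd.deriv]
    have h1 : a * x < 1 := by
      have := hx.2
      rw [lt_div_iff₀ ha0] at this; linarith
    have h2 : a < x⁻¹ := by
      rw [inv_eq_one_div, lt_div_iff₀ hx0]; linarith
    linarith

theorem steepness (a : ℝ) (ha : a ∈ Set.Ioo (0 : ℝ) 1)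
    (θc : ℝ) (hθc : θc = a - 1 - Real.log a)
    (xs : ℝ → ℝ)
    (hxs : ∀ θ < θc, xs θ = Real.exp (θ + a * (xs θ - 1)) ∧
      ∀ z : ℝ, z = Real.exp (θ + a * (z - 1)) → xs θ ≤ z) :
    Filter.Tendsto xs (nhdsWithin θc (Set.Iio θc)) (nhds (1 / a)) ∧
    Filter.Tendsto (fun θ => xs θ / (1 - a * xs θ)) (nhdsWithin θc (Set.Iio θc))
      Filter.atTop := by
  obtain ⟨ha0, ha1⟩ := ha
  have hainv : 0 < 1/a := by positivity
  set g : ℝ → ℝ := fun x => Real.log x - a * (x - 1) with hg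
  have hmono := steep_gmono a ha0
  have hg1a : g (1/a) = θc := by
    simp only [hg, hθc, one_div, Real.log_inv]
    have : a * (a⁻¹ - 1) = 1 - a := by field_simp
    rw [this]; ring
  -- key facts about xs
  have key : ∀ θ < θc, xs θ ∈ Set.Ioo 0 (1/a) ∧ g (xs θ) = θ := by
    intro θ hθ
    obtain ⟨heq, hmin⟩ := hxs θ hθ
    have hpos : 0 < xs θ := heq ▸ Real.exp_pos _
    have hgxs : g (xs θ) = θ := by
      have hl := congrArg Real.log heq
      rw [Real.log_exp] at hl
      simp only [hg]; rw [hl]; ring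
    -- existence of a solution below 1/a by IVT
    set x1 : ℝ := min (Real.exp (θ - 2)) (1/(2*a)) with hx1
    have hx1pos : 0 < x1 := lt_min (Real.exp_pos _) (by positivity)
    have hx1lt : x1 < 1/a := by
      have : (1:ℝ)/(2*a) < 1/a := by
        rw [div_lt_div_iff₀ (by positivity) ha0]; nlinarith
      exact lt_of_le_of_lt (min_le_right _ _) this
    have hgx1 : g x1 < θ := by
      have hlog : Real.log x1 ≤ θ - 2 := by
        calc Real.log x1 ≤ Real.log (Real.exp (θ - 2)) :=
              Real.log_le_log hx1pos (min_le_left _ _)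
          _ = θ - 2 := Real.log_exp _
      have hax1 : 0 < a * x1 := by positivity
      simp only [hg]; nlinarith
    have hcont : ContinuousOn g (Set.Icc x1 (1/a)) := by
      apply ContinuousOn.sub
      · exact Real.continuousOn_log.mono (fun x hx => by
          simp; exact ne_of_gt (lt_of_lt_of_le hx1pos hx.1))
      · fun_prop
    have hθmem : θ ∈ Set.Ioo (g x1) (g (1/a)) := ⟨hgx1, hg1a ▸ hθ⟩
    obtain ⟨z, hzmem, hgz⟩ := intermediate_value_Ioo hx1lt.le hcont hθmem
    have hz0 : 0 < z := lt_trans hx1pos hzmem.1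
    have hzeq : z = Real.exp (θ + a * (z - 1)) := by
      have : Real.log z = θ + a * (z - 1) := by
        simp only [hg] at hgz; linarith
      rw [← this, Real.exp_log hz0]
    have hle : xs θ ≤ z := hmin z hzeq
    exact ⟨⟨hpos, lt_of_le_of_lt hle hzmem.2⟩, hgxs⟩
  -- Part 1
  have h1 : Filter.Tendsto xs (nhdsWithin θc (Set.Iio θc)) (nhds (1/a)) := by
    rw [Metric.tendsto_nhdsWithin_nhds]
    intro ε hε
    set ε' : ℝ := min ε (1/(2*a)) with hε'
    have hε'pos : 0 < ε' := lt_min hε (by positivity)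
    set x0 : ℝ := 1/a - ε' with hx0
    have hx0pos : 0 < x0 := by
      have h2a : ε' ≤ 1/(2*a) := min_le_right _ _
      have : (1:ℝ)/(2*a) < 1/a := by
        rw [div_lt_div_iff₀ (by positivity) ha0]; nlinarith
      simp only [hx0]; linarith
    have hx0lt : x0 < 1/a := by simp only [hx0]; linarith
    have hx0mem : x0 ∈ Set.Ioc 0 (1/a) := ⟨hx0pos, hx0lt.le⟩
    have hgx0 : g x0 < θc := by
      rw [← hg1a]
      exact hmono hx0mem ⟨hainv, le_refl _⟩ hx0lt
    refine ⟨θc - g x0, by linarith, ?_⟩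
    intro θ hθ hdist
    have hθlt : θ < θc := hθ
    rw [Real.dist_eq, abs_of_neg (by linarith : θ - θc < 0)] at hdist
    have hθgt : g x0 < θ := by linarith
    obtain ⟨⟨hxs0, hxslt⟩, hgxs⟩ := key θ hθlt
    have hxsmem : xs θ ∈ Set.Ioc 0 (1/a) := ⟨hxs0, hxslt.le⟩
    have hx0xs : x0 < xs θ := by
      rw [← hmono.lt_iff_lt hx0mem hxsmem]
      show g x0 < g (xs θ)
      rw [hgxs]; exact hθgt
    rw [Real.dist_eq, abs_of_neg (by linarith : xs θ - 1/a < 0)]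
    have : ε' ≤ ε := min_le_left _ _
    simp only [hx0] at hx0xs
    linarith
  refine ⟨h1, ?_⟩
  -- Part 2
  have h2 : Filter.Tendsto (fun θ => 1 - a * xs θ) (nhdsWithin θc (Set.Iio θc))
      (nhds 0) := by
    have hh : Filter.Tendsto (fun θ => 1 - a * xs θ) (nhdsWithin θc (Set.Iio θc))
        (nhds (1 - a * (1/a))) := (tendsto_const_nhds (x := (1:ℝ))).sub (h1.const_mul a)
    have heq : 1 - a * (1/a) = 0 := by field_simp; norm_num
    rw [heq] at hh
    exact hh
  have hev : ∀ᶠ θ in nhdsWithin θc (Set.Iio θc), 0 < 1 - a * xs θ := by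
    filter_upwards [self_mem_nhdsWithin] with θ hθ
    obtain ⟨⟨hxs0, hxslt⟩, _⟩ := key θ hθ
    have : a * xs θ < 1 := by
      have := (lt_div_iff₀ ha0).mp hxslt
      linarith
    linarith
  have h3 : Filter.Tendsto (fun θ => 1 - a * xs θ) (nhdsWithin θc (Set.Iio θc))
      (nhdsWithin 0 (Set.Ioi 0)) := by
    rw [tendsto_nhdsWithin_iff]
    exact ⟨h2, hev⟩
  have h4 : Filter.Tendsto (fun θ => (1 - a * xs θ)⁻¹) (nhdsWithin θc (Set.Iio θc))
      Filter.atTop := tendsto_inv_nhdsGT_zero.comp h3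
  have h5 := h1.pos_mul_atTop hainv h4
  simp only [div_eq_mul_inv]
  exact h5
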